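/- Let 0 < a < b and λ ∈ ℝ \ ℤ, and d ≥ 1. For every polynomial q in d variables with integer coefficients and degree ≤ n_j in the j-th variable with ∑ n_j = n, sup_{x ∈ [a,b]^d} |λ − q(x)| ≥ (min_{c ∈ ℤ} |λ − c|) · ((√b − √a)/(√b + √a))ⁿ. -/

import Mathlib

open Polynomial Complex

lemma bernstein_one (a b : ℝ) (ha : 0 < a) (hab : a < b)
    (p : Polynomial ℝ) (m : ℕ) (hm : p.natDegree ≤ m) (M : ℝ)
    (hM : ∀ x ∈ Set.Icc a b, |p.eval x| ≤ M) :
    |p.eval 0| * ((Real.sqrt b - Real.sqrt a) / (Real.sqrt b + Real.sqrt a)) ^ m ≤ M := by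
  set sa := Real.sqrt a with hsa
  set sb := Real.sqrt b with hsb
  have hsa0 : 0 < sa := Real.sqrt_pos.2 ha
  have hsb0 : 0 < sb := Real.sqrt_pos.2 (ha.trans hab)
  have hsab : sa < sb := Real.sqrt_lt_sqrt ha.le hab
  have ha2 : sa ^ 2 = a := Real.sq_sqrt ha.le
  have hb2 : sb ^ 2 = b := Real.sq_sqrt (ha.trans hab).le
  set ρ : ℝ := (sb - sa) / (sb + sa) with hρ
  have hρ0 : 0 < ρ := div_pos (by linarith) (by linarith)
  have hρ1 : ρ < 1 := (div_lt_one (by linarith)).2 (by linarith)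
  set c : ℝ := (a + b) / 2 with hc
  set r : ℝ := (b - a) / 4 with hr
  have hr0 : 0 < r := by rw [hr]; linarith
  have hd1 : sb - sa ≠ 0 := sub_ne_zero.2 hsab.ne'
  have hd2 : sb + sa ≠ 0 := by positivity
  -- key identity
  have hkey : c + r * (-ρ + (-ρ)⁻¹) = 0 := by
    rw [inv_neg, hρ, inv_div, hc, hr, ← ha2, ← hb2]
    field_simp
    ring
  -- complex polynomial
  set P : Polynomial ℂ := p.map (algebraMap ℝ ℂ) with hP
  have hPdeg : P.natDegree ≤ m := Polynomial.natDegree_map_le.trans hm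
  have hPev : ∀ t : ℝ, P.eval (t : ℂ) = ((p.eval t : ℝ) : ℂ) := by
    intro t
    rw [hP, Polynomial.eval_map]
    exact Polynomial.eval₂_at_apply (algebraMap ℝ ℂ) t
  set Q : Polynomial ℂ := ∑ k ∈ Finset.range (m+1),
      C (P.coeff k) * X ^ (m - k) * (C (r:ℂ) * X ^ 2 + C (c:ℂ) * X + C (r:ℂ)) ^ k with hQ
  have hQeval : ∀ w : ℂ, w ≠ 0 →
      Q.eval w = w ^ m * P.eval ((c:ℂ) + (r:ℂ) * w + (r:ℂ) / w) := by
    intro w hw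
    rw [hQ, Polynomial.eval_finset_sum,
      Polynomial.eval_eq_sum_range' (Nat.lt_succ_of_le hPdeg), Finset.mul_sum]
    refine Finset.sum_congr rfl fun k hk => ?_
    have hk' : k ≤ m := Nat.lt_succ_iff.1 (Finset.mem_range.1 hk)
    simp only [Polynomial.eval_mul, Polynomial.eval_add, Polynomial.eval_pow,
      Polynomial.eval_C, Polynomial.eval_X]
    have h1 : (r:ℂ) * w ^ 2 + (c:ℂ) * w + (r:ℂ) = w * ((c:ℂ) + (r:ℂ) * w + (r:ℂ) / w) := by
      field_simp; ring
    have h2 : w ^ (m - k) * w ^ k = w ^ m := by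
      rw [← pow_add, Nat.sub_add_cancel hk']
    rw [h1, mul_pow]
    linear_combination (P.coeff k * ((c:ℂ) + (r:ℂ) * w + (r:ℂ) / w) ^ k) * h2
  -- bound on the sphere
  have hfront : ∀ w : ℂ, w ∈ frontier (Metric.ball (0:ℂ) 1) → ‖Q.eval w‖ ≤ M := by
    intro w hw
    rw [frontier_ball (0:ℂ) one_ne_zero, mem_sphere_zero_iff_norm] at hw
    have hw0 : w ≠ 0 := by intro h; rw [h] at hw; simp at hw
    have hinv : w⁻¹ = starRingEnd ℂ w := Complex.inv_eq_conj hw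
    set x : ℝ := c + 2 * r * w.re with hx
    have hconj : w + starRingEnd ℂ w = 2 * (w.re : ℂ) := by
      rw [Complex.add_conj]; push_cast; ring
    have hz : (c:ℂ) + (r:ℂ) * w + (r:ℂ) / w = (x:ℂ) := by
      rw [div_eq_mul_inv, hinv, hx]
      push_cast
      linear_combination (r : ℂ) * hconj
    have hre : |w.re| ≤ 1 := by
      rw [← hw]; exact Complex.abs_re_le_norm w
    have hxmem : x ∈ Set.Icc a b := by
      rw [abs_le] at hre
      constructor
      · rw [hx, hc, hr]; nlinarith
      · rw [hx, hc, hr]; nlinarith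
    rw [hQeval w hw0, hz, hPev x, norm_mul, norm_pow, hw, one_pow, one_mul,
      Complex.norm_real, Real.norm_eq_abs]
    exact hM x hxmem
  -- maximum modulus
  have hw0mem : (↑(-ρ) : ℂ) ∈ closure (Metric.ball (0:ℂ) 1) := by
    rw [closure_ball (0:ℂ) one_ne_zero, Metric.mem_closedBall, dist_zero_right,
      Complex.norm_real, Real.norm_eq_abs, abs_neg, abs_of_pos hρ0]
    exact hρ1.le
  have hmax : ‖Q.eval (↑(-ρ) : ℂ)‖ ≤ M :=
    Complex.norm_le_of_forall_mem_frontier_norm_le Metric.isBounded_ball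
      (Q.differentiable.diffContOnCl) hfront hw0mem
  have hρne : (↑(-ρ) : ℂ) ≠ 0 := by
    simp only [ne_eq, Complex.ofReal_eq_zero, neg_eq_zero]
    exact hρ0.ne'
  rw [hQeval _ hρne] at hmax
  have hzero : (c:ℂ) + (r:ℂ) * (↑(-ρ):ℂ) + (r:ℂ) / (↑(-ρ):ℂ) = ((0:ℝ):ℂ) := by
    rw [show (0:ℝ) = c + r * (-ρ) + r * (-ρ)⁻¹ by linarith [hkey]]
    push_cast
    ring
  rw [hzero, hPev 0, norm_mul, norm_pow, Complex.norm_real, Real.norm_eq_abs,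
    Complex.norm_real, Real.norm_eq_abs, abs_neg, abs_of_pos hρ0] at hmax
  calc |p.eval 0| * ρ ^ m = ρ ^ m * |p.eval 0| := by ring
  _ ≤ M := hmax


lemma bernstein_mv (a b : ℝ) (ha : 0 < a) (hab : a < b) :
    ∀ (d : ℕ) (p : MvPolynomial (Fin d) ℝ) (nv : Fin d → ℕ),
      (∀ j, p.degreeOf j ≤ nv j) → ∀ M : ℝ,
      (∀ x : Fin d → ℝ, (∀ i, x i ∈ Set.Icc a b) → |MvPolynomial.eval x p| ≤ M) →
      |MvPolynomial.eval (fun _ => 0) p| *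
        ((Real.sqrt b - Real.sqrt a) / (Real.sqrt b + Real.sqrt a)) ^ (∑ j, nv j) ≤ M := by
  set ρ : ℝ := (Real.sqrt b - Real.sqrt a) / (Real.sqrt b + Real.sqrt a) with hρ
  have hsab : Real.sqrt a < Real.sqrt b := Real.sqrt_lt_sqrt ha.le hab
  have hsa0 : 0 < Real.sqrt a := Real.sqrt_pos.2 ha
  have hρ0 : 0 < ρ := div_pos (by linarith) (by linarith)
  intro d
  induction d with
  | zero =>
    intro p nv hdeg M hM
    simp only [Finset.univ_eq_empty, Finset.sum_empty, pow_zero, mul_one]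
    exact hM (fun _ => 0) (fun i => i.elim0)
  | succ d ih =>
    intro p nv hdeg M hM
    set P := MvPolynomial.finSuccEquiv ℝ d p with hPdef
    set q' := P.coeff 0 with hq'
    have hstep : ∀ x : Fin d → ℝ, (∀ i, x i ∈ Set.Icc a b) →
        |MvPolynomial.eval x q'| ≤ M / ρ ^ (nv 0) := by
      intro x hx
      have hdeg1 : (P.map (MvPolynomial.eval x)).natDegree ≤ nv 0 := by
        refine Polynomial.natDegree_map_le.trans ?_
        rw [hPdef, MvPolynomial.natDegree_finSuccEquiv]
        exact hdeg 0
      have hMx : ∀ t ∈ Set.Icc a b, |(P.map (MvPolynomial.eval x)).eval t| ≤ M := by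
        intro t ht
        rw [← MvPolynomial.eval_eq_eval_mv_eval']
        refine hM _ (fun i => ?_)
        refine Fin.cases ?_ (fun j => ?_) i
        · simpa using ht
        · simpa using hx j
      have := bernstein_one a b ha hab (P.map (MvPolynomial.eval x)) (nv 0) hdeg1 M hMx
      have hev0 : (P.map (MvPolynomial.eval x)).eval 0 = MvPolynomial.eval x q' := by
        rw [← Polynomial.coeff_zero_eq_eval_zero, Polynomial.coeff_map, hq']
      rw [hev0] at this
      rw [le_div_iff₀ (by positivity)]
      exact this
    have hdeg' : ∀ j : Fin d, q'.degreeOf j ≤ nv j.succ := fun j =>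
      (MvPolynomial.degreeOf_coeff_finSuccEquiv p j 0).trans (hdeg j.succ)
    have hIH := ih q' (fun j => nv j.succ) hdeg' (M / ρ ^ (nv 0)) hstep
    have hev : MvPolynomial.eval (fun _ => 0 : Fin (d+1) → ℝ) p =
        MvPolynomial.eval (fun _ => 0 : Fin d → ℝ) q' := by
      have h1 : (fun _ => 0 : Fin (d+1) → ℝ) = Fin.cons 0 (fun _ => 0) := by
        funext i
        refine Fin.cases ?_ (fun j => ?_) i <;> simp
      rw [h1, MvPolynomial.eval_eq_eval_mv_eval', ← Polynomial.coeff_zero_eq_eval_zero,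
        Polynomial.coeff_map, hq']
    rw [hev, Fin.sum_univ_succ, pow_add]
    have hre : |MvPolynomial.eval (fun _ => 0 : Fin d → ℝ) q'| *
        (ρ ^ nv 0 * ρ ^ ∑ i : Fin d, nv i.succ) =
        (|MvPolynomial.eval (fun _ => 0 : Fin d → ℝ) q'| * ρ ^ ∑ i : Fin d, nv i.succ) *
          ρ ^ nv 0 := by ring
    rw [hre]
    calc (|MvPolynomial.eval (fun _ => 0 : Fin d → ℝ) q'| * ρ ^ ∑ i : Fin d, nv i.succ) *
          ρ ^ nv 0
        ≤ M / ρ ^ nv 0 * ρ ^ nv 0 := mul_le_mul_of_nonneg_right hIH (by positivity)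
      _ = M := div_mul_cancel₀ M (by positivity)

theorem stmt_10 (a b : ℝ) (ha : 0 < a) (hab : a < b)
    (lam : ℝ) (hlam : ∀ c : ℤ, lam ≠ c) (d : ℕ) (hd : 1 ≤ d)
    (q : MvPolynomial (Fin d) ℤ) (nv : Fin d → ℕ) (n : ℕ)
    (hdeg : ∀ j, q.degreeOf j ≤ nv j) (hsum : ∑ j, nv j = n)
    (M : ℝ)
    (hM : ∀ x : Fin d → ℝ, (∀ i, x i ∈ Set.Icc a b) →
      |lam - MvPolynomial.eval x (q.map (Int.castRingHom ℝ))| ≤ M) :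
    sInf {y : ℝ | ∃ c : ℤ, y = |lam - c|} *
      ((Real.sqrt b - Real.sqrt a) / (Real.sqrt b + Real.sqrt a)) ^ n ≤ M := by
  classical
  set ρ : ℝ := (Real.sqrt b - Real.sqrt a) / (Real.sqrt b + Real.sqrt a) with hρ
  have hsab : Real.sqrt a < Real.sqrt b := Real.sqrt_lt_sqrt ha.le hab
  have hsa0 : 0 < Real.sqrt a := Real.sqrt_pos.2 ha
  have hρ0 : 0 < ρ := div_pos (by linarith) (by linarith)
  set p : MvPolynomial (Fin d) ℝ := MvPolynomial.C lam - q.map (Int.castRingHom ℝ) with hp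
  have hpe : ∀ x : Fin d → ℝ, MvPolynomial.eval x p =
      lam - MvPolynomial.eval x (q.map (Int.castRingHom ℝ)) := by
    intro x; rw [hp]; simp
  have hpdeg : ∀ j, p.degreeOf j ≤ nv j := by
    intro j
    refine (MvPolynomial.degreeOf_sub_le j _ _).trans ?_
    rw [MvPolynomial.degreeOf_C]
    simp only [max_le_iff, Nat.zero_le, true_and]
    refine le_trans ?_ (hdeg j)
    rw [MvPolynomial.degreeOf_def, MvPolynomial.degreeOf_def,
      MvPolynomial.degrees_map_of_injective q
        (show Function.Injective (Int.castRingHom ℝ) from Int.cast_injective)]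
  have hbern := bernstein_mv a b ha hab d p nv hpdeg M
    (fun x hx => by rw [hpe]; exact hM x hx)
  rw [hsum] at hbern
  set c0 : ℤ := MvPolynomial.eval (fun _ => 0) q with hc0
  have hev0 : MvPolynomial.eval (fun _ => 0 : Fin d → ℝ) p = lam - (c0 : ℝ) := by
    rw [hpe]
    congr 1
    rw [MvPolynomial.eval_zero', MvPolynomial.constantCoeff_map, hc0,
      MvPolynomial.eval_zero']
    rfl
  rw [hev0] at hbern
  have hinf : sInf {y : ℝ | ∃ c : ℤ, y = |lam - c|} ≤ |lam - (c0 : ℝ)| := by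
    refine csInf_le ⟨0, fun y hy => ?_⟩ ⟨c0, rfl⟩
    obtain ⟨c, rfl⟩ := hy
    exact abs_nonneg _
  calc sInf {y : ℝ | ∃ c : ℤ, y = |lam - c|} * ρ ^ n
      ≤ |lam - (c0 : ℝ)| * ρ ^ n := mul_le_mul_of_nonneg_right hinf (by positivity)
    _ ≤ M := hbern
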